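/- arXiv:1601.06814 — 2 statements merged into one kernel-verified Lean document; each statement's English description precedes it below -/
import Mathlib

section
/- For any fully digital beamforming matrix V_FD ∈ ℂ^{N×N_s}, there exist a matrix V_RF ∈ ℂ^{N×2N_s} all of whose entries have unit modulus and a matrix V_D ∈ ℂ^{2N_s×N_s} such that V_RF · V_D = V_FD. -/
open Complex in
lemma two_phase (z : ℂ) (hz : ‖z‖ ≤ 2) :
    ∃ u v : ℂ, ‖u‖ = 1 ∧ ‖v‖ = 1 ∧ u + v = z := by
  rcases eq_or_ne z 0 with h | h
  · exact ⟨1, -1, by simp, by simp, by simp [h]⟩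
  · set a : ℝ := ‖z‖ with ha
    have ha0 : 0 < a := norm_pos_iff.mpr h
    set s : ℝ := Real.sqrt (1 - (a / 2) ^ 2) with hsdef
    have hs : s ^ 2 = 1 - (a / 2) ^ 2 := Real.sq_sqrt (by nlinarith)
    set d : ℂ := z / (a : ℂ) with hd
    have hane : (a : ℂ) ≠ 0 := by exact_mod_cast ha0.ne'
    have habs_d : ‖d‖ = 1 := by
      rw [hd, norm_div, Complex.norm_of_nonneg ha0.le]; exact div_self ha0.ne'
    have key : ∀ t : ℝ, ‖((a / 2 : ℝ) + (t : ℂ) * Complex.I)‖ = 1 → True := fun _ _ => trivial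
    refine ⟨d * ((a / 2 : ℝ) + (s : ℂ) * Complex.I),
            d * ((a / 2 : ℝ) + ((-s : ℝ) : ℂ) * Complex.I), ?_, ?_, ?_⟩
    · rw [norm_mul, habs_d, one_mul, Complex.norm_add_mul_I]
      rw [show (a / 2) ^ 2 + s ^ 2 = 1 by nlinarith]
      exact Real.sqrt_one
    · rw [norm_mul, habs_d, one_mul, Complex.norm_add_mul_I]
      rw [show (a / 2) ^ 2 + (-s) ^ 2 = 1 by nlinarith]
      exact Real.sqrt_one
    · have : d * ((a / 2 : ℝ) + (s : ℂ) * Complex.I)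
           + d * ((a / 2 : ℝ) + ((-s : ℝ) : ℂ) * Complex.I) = d * (a : ℂ) := by
        push_cast
        ring
      rw [this, hd, div_mul_cancel₀ _ hane]

theorem stmt_3 (N Ns : ℕ) (V_FD : Matrix (Fin N) (Fin Ns) ℂ) :
    ∃ (V_RF : Matrix (Fin N) (Fin (2 * Ns)) ℂ) (V_D : Matrix (Fin (2 * Ns)) (Fin Ns) ℂ),
      (∀ i j, ‖V_RF i j‖ = 1) ∧ V_RF * V_D = V_FD := by
  classical
  set c : Fin Ns → ℝ := fun k => 1 + ∑ i, ‖V_FD i k‖ with hc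
  have hcpos : ∀ k, 0 < c k := by
    intro k
    have : 0 ≤ ∑ i, ‖V_FD i k‖ :=
      Finset.sum_nonneg fun i _ => norm_nonneg _
    simp only [hc]; linarith
  have hbound : ∀ i k, ‖V_FD i k / (c k : ℂ)‖ ≤ 2 := by
    intro i k
    rw [norm_div, Complex.norm_of_nonneg (hcpos k).le]
    rw [div_le_iff₀ (hcpos k)]
    have h1 : ‖V_FD i k‖ ≤ ∑ j, ‖V_FD j k‖ :=
      Finset.single_le_sum (f := fun j => ‖V_FD j k‖)
        (fun j _ => norm_nonneg _) (Finset.mem_univ i)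
    have h2 : 0 ≤ ∑ j, ‖V_FD j k‖ :=
      Finset.sum_nonneg fun j _ => norm_nonneg _
    simp only [hc]
    nlinarith
  choose u v hu hv huv using fun i k => two_phase (V_FD i k / (c k : ℂ)) (hbound i k)
  refine ⟨Matrix.of fun i j => if (finProdFinEquiv.symm j).1 = 0 then u i (finProdFinEquiv.symm j).2
                     else v i (finProdFinEquiv.symm j).2,
          Matrix.of fun j k => if (finProdFinEquiv.symm j).2 = k then (c k : ℂ) else 0, ?_, ?_⟩
  · intro i j
    simp only [Matrix.of_apply]
    by_cases h : (finProdFinEquiv.symm j).1 = 0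
    · rw [if_pos h]; exact hu _ _
    · rw [if_neg h]; exact hv _ _
  · ext i k
    rw [Matrix.mul_apply]
    rw [← Equiv.sum_comp (finProdFinEquiv : Fin 2 × Fin Ns ≃ Fin (2 * Ns))]
    simp only [Matrix.of_apply, Equiv.symm_apply_apply]
    rw [Fintype.sum_prod_type_right]
    rw [Finset.sum_eq_single k]
    · rw [Fin.sum_univ_two]
      norm_num
      rw [← add_mul, huv i k, div_mul_cancel₀]
      exact_mod_cast (hcpos k).ne'
    · intro b _ hb
      simp [hb]
    · intro h
      exact absurd (Finset.mem_univ k) h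
end

section
/- If V_FD ∈ ℂ^{N×N_s} has rank r, then there exist a matrix V_RF ∈ ℂ^{N×2r} with all entries of unit modulus and a matrix V_D ∈ ℂ^{2r×N_s} such that V_RF · V_D = V_FD. -/
-- two unit-modulus numbers summing to any a with |a| ≤ 2
lemma exists_two_unit (a : ℂ) (ha : ‖a‖ ≤ 2) :
    ∃ u v : ℂ, ‖u‖ = 1 ∧ ‖v‖ = 1 ∧ u + v = a := by
  set d : ℂ := if a = 0 then 1 else a / (‖a‖ : ℂ) with hdd
  have hd : ‖d‖ = 1 := by
    by_cases h : a = 0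
    · simp [hdd, h]
    · have : ‖a‖ ≠ 0 := by simpa using h
      simp [hdd, h, norm_div, abs_norm, div_self this]
  have had : ((‖a‖ : ℝ) : ℂ) * d = a := by
    by_cases h : a = 0
    · simp [hdd, h]
    · have : (‖a‖ : ℂ) ≠ 0 := by simpa using h
      rw [hdd, if_neg h]; field_simp
  set x : ℝ := ‖a‖ / 2 with hx
  set s : ℝ := Real.sqrt (1 - x ^ 2) with hs
  have hx1 : x ^ 2 ≤ 1 := by
    have h0 : 0 ≤ ‖a‖ := norm_nonneg a
    rw [hx]; nlinarith
  have hs2 : s ^ 2 = 1 - x ^ 2 := Real.sq_sqrt (by linarith)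
  have habsxs : ‖(x : ℂ) + (s : ℂ) * Complex.I‖ = 1 := by
    rw [Complex.norm_add_mul_I]
    rw [show x ^ 2 + s ^ 2 = 1 by rw [hs2]; ring]
    exact Real.sqrt_one
  have habsxs' : ‖(x : ℂ) - (s : ℂ) * Complex.I‖ = 1 := by
    have : (x : ℂ) - (s : ℂ) * Complex.I = (starRingEnd ℂ) ((x : ℂ) + (s : ℂ) * Complex.I) := by
      simp [Complex.ext_iff]
    rw [this, Complex.norm_conj]; exact habsxs
  refine ⟨d * ((x : ℂ) + (s : ℂ) * Complex.I), d * ((x : ℂ) - (s : ℂ) * Complex.I), ?_, ?_, ?_⟩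
  · rw [norm_mul, hd, habsxs, one_mul]
  · rw [norm_mul, hd, habsxs', one_mul]
  · have : d * ((x : ℂ) + (s : ℂ) * Complex.I) + d * ((x : ℂ) - (s : ℂ) * Complex.I)
        = ((‖a‖ : ℝ) : ℂ) * d := by
      rw [hx]; push_cast; ring
    rw [this, had]

theorem stmt_4 (N Ns r : ℕ) (V_FD : Matrix (Fin N) (Fin Ns) ℂ) (hrank : V_FD.rank = r) :
    ∃ (V_RF : Matrix (Fin N) (Fin (2 * r)) ℂ) (V_D : Matrix (Fin (2 * r)) (Fin Ns) ℂ),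
      (∀ i j, ‖V_RF i j‖ = 1) ∧ V_RF * V_D = V_FD := by
  classical
  set W := LinearMap.range V_FD.mulVecLin with hWdef
  have hW : Module.finrank ℂ W = r := hrank
  let b : Module.Basis (Fin r) ℂ W := Module.finBasisOfFinrankEq ℂ W hW
  -- columns of V_FD lie in W
  have hcol : ∀ k : Fin Ns, (fun i => V_FD i k) ∈ W := by
    intro k
    refine ⟨Pi.single k 1, ?_⟩
    ext i
    simp [Matrix.mulVec_single]
  let col : Fin Ns → W := fun k => ⟨fun i => V_FD i k, hcol k⟩
  let A : Matrix (Fin N) (Fin r) ℂ := fun i j => (b j : Fin N → ℂ) i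
  let B : Matrix (Fin r) (Fin Ns) ℂ := fun j k => b.repr (col k) j
  have hAB : ∀ i k, (∑ j, A i j * B j k) = V_FD i k := by
    intro i k
    have h := b.sum_repr (col k)
    have h2 := congrFun (congrArg (Subtype.val) h) i
    simpa [A, B, col, mul_comm, -Module.Basis.sum_repr] using h2
  -- scaling constants
  let c : Fin r → ℝ := fun j => (∑ i, ‖A i j‖) + 1
  have hcpos : ∀ j, 0 < c j := by
    intro j
    have : 0 ≤ ∑ i, ‖A i j‖ :=
      Finset.sum_nonneg fun i _ => norm_nonneg _
    simp only [c]; linarith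
  have hcle : ∀ i j, ‖A i j / (c j : ℂ)‖ ≤ 2 := by
    intro i j
    rw [norm_div]
    have h1 : ‖A i j‖ ≤ c j := by
      have : ‖A i j‖ ≤ ∑ i', ‖A i' j‖ :=
        Finset.single_le_sum (f := fun i' => ‖A i' j‖)
          (fun i' _ => norm_nonneg _) (Finset.mem_univ i)
      simp only [c]; linarith
    have h2 : ‖(c j : ℂ)‖ = c j := by
      rw [Complex.norm_real, Real.norm_eq_abs, abs_of_pos (hcpos j)]
    rw [h2]
    rw [div_le_iff₀ (hcpos j)]
    nlinarith [hcpos j]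
  choose u v hu hv huv using fun i j => exists_two_unit (A i j / (c j : ℂ)) (hcle i j)
  -- matrices over the sum type
  let VRF' : Matrix (Fin N) (Fin r ⊕ Fin r) ℂ := fun i j =>
    Sum.casesOn j (fun j => u i j) (fun j => v i j)
  let VD' : Matrix (Fin r ⊕ Fin r) (Fin Ns) ℂ := fun j k =>
    Sum.casesOn j (fun j => (c j : ℂ) * B j k) (fun j => (c j : ℂ) * B j k)
  have hprod : VRF' * VD' = V_FD := by
    ext i k
    rw [Matrix.mul_apply, Fintype.sum_sum_type]
    simp only [VRF', VD']
    rw [← Finset.sum_add_distrib]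
    rw [← hAB i k]
    refine Finset.sum_congr rfl fun j _ => ?_
    have hc0 : ((c j : ℂ)) ≠ 0 := by
      simpa using ne_of_gt (hcpos j)
    have h := huv i j
    rw [eq_div_iff hc0] at h
    linear_combination (B j k) * h
  let e : Fin r ⊕ Fin r ≃ Fin (2 * r) := finSumFinEquiv.trans (finCongr (two_mul r).symm)
  refine ⟨VRF'.submatrix id e.symm, VD'.submatrix e.symm id, ?_, ?_⟩
  · intro i j
    rcases he : (e.symm j) with j' | j'
    · rw [Matrix.submatrix_apply, he]; exact hu i j'
    · rw [Matrix.submatrix_apply, he]; exact hv i j'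
  · rw [Matrix.submatrix_mul_equiv, hprod]
    rfl
end
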